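/- Let k ≥ 1, p ≥ 2 and M > 0. There exists a constant c = c(k,p,M) > 0 such that for all z, η ∈ ℝ^k with |η| ≤ M one has |V_p(z) − V_p(η)| ≤ c |V_p(z − η)|. -/

import Mathlib

noncomputable def Vp (p : ℝ) {E : Type*} [NormedAddCommGroup E] [NormedSpace ℝ E] (z : E) : E :=
  ((1 + ‖z‖ ^ 2) ^ ((p - 2) / 4)) • z

open Real Set RealInnerProductSpace

theorem stmt_6 (k : ℕ) (hk : 1 ≤ k) (p : ℝ) (hp : 2 ≤ p) (M : ℝ) (hM : 0 < M) :
    ∃ c : ℝ, 0 < c ∧ ∀ z η : EuclideanSpace ℝ (Fin k), ‖η‖ ≤ M →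
      ‖Vp p z - Vp p η‖ ≤ c * ‖Vp p (z - η)‖ := by
  set E := EuclideanSpace ℝ (Fin k)
  set α : ℝ := (p - 2) / 4 with hα_def
  have hα : 0 ≤ α := by rw [hα_def]; linarith
  have hK : (0:ℝ) < 2 + 2 * M ^ 2 := by positivity
  refine ⟨(1 + 2 * α) * (2 + 2 * M ^ 2) ^ α, by positivity, ?_⟩
  intro z η hη
  set v : E := z - η with hv_def
  -- the function along the segment
  set u : ℝ → E := fun t => η + t • v with hu_def
  set A : ℝ → ℝ := fun t => 1 + ‖u t‖ ^ 2 with hA_def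
  have hApos : ∀ t, 0 < A t := fun t => by positivity
  set f : ℝ → E := fun t => Vp p (u t) with hf_def
  set f' : ℝ → E := fun t =>
    (α * A t ^ (α - 1) * (⟪u t, v⟫ + ⟪v, u t⟫)) • u t + A t ^ α • v with hf'_def
  have hderiv : ∀ t : ℝ, HasDerivAt f (f' t) t := by
    intro t
    have hu : HasDerivAt u v t := by
      have : HasDerivAt (fun s : ℝ => s • v) ((1:ℝ) • v) t := (hasDerivAt_id t).smul_const v
      have h2 : HasDerivAt (fun s : ℝ => s • v) v t := by simpa using this
      exact h2.const_add η
    have hin : HasDerivAt (fun s => ⟪u s, u s⟫) (⟪u t, v⟫ + ⟪v, u t⟫) t := hu.inner ℝ hu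
    have hA' : HasDerivAt A (⟪u t, v⟫ + ⟪v, u t⟫) t := by
      have : HasDerivAt (fun s => 1 + ⟪u s, u s⟫) (⟪u t, v⟫ + ⟪v, u t⟫) t :=
        hin.const_add 1
      refine this.congr_deriv rfl |>.congr_of_eventuallyEq ?_
      filter_upwards with s
      simp [hA_def, real_inner_self_eq_norm_sq]
    have hpow : HasDerivAt (fun s => A s ^ α)
        (α * A t ^ (α - 1) * (⟪u t, v⟫ + ⟪v, u t⟫)) t :=
      (hA'.rpow_const (Or.inl (hApos t).ne')).congr_deriv (by ring)
    have := hpow.smul hu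
    have heq : f = fun s => A s ^ α • u s := by
      funext s; simp [hf_def, hA_def, Vp, hα_def]
    rw [heq]
    exact this.congr_deriv (add_comm _ _)
  -- bound on the derivative
  have hAle : ∀ t ∈ Icc (0:ℝ) 1, A t ≤ (2 + 2 * M ^ 2) * (1 + ‖v‖ ^ 2) := by
    intro t ht
    have h1 : ‖u t‖ ≤ M + ‖v‖ := by
      calc ‖u t‖ ≤ ‖η‖ + ‖t • v‖ := norm_add_le _ _
        _ = ‖η‖ + |t| * ‖v‖ := by rw [norm_smul, Real.norm_eq_abs]
        _ ≤ M + 1 * ‖v‖ := by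
            gcongr
            rw [abs_of_nonneg ht.1]; exact ht.2
        _ = M + ‖v‖ := by ring
    have h2 : ‖u t‖ ^ 2 ≤ (M + ‖v‖) ^ 2 := pow_le_pow_left₀ (norm_nonneg _) h1 2
    have hA2 : A t = 1 + ‖u t‖ ^ 2 := rfl
    nlinarith [norm_nonneg v, norm_nonneg (u t), sq_nonneg (M - ‖v‖)]
  have hbound : ∀ t ∈ Icc (0:ℝ) 1,
      ‖f' t‖ ≤ (1 + 2 * α) * (2 + 2 * M ^ 2) ^ α * ((1 + ‖v‖ ^ 2) ^ α * ‖v‖) := by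
    intro t ht
    have hA := hApos t
    have hB : (0:ℝ) < 1 + ‖v‖ ^ 2 := by positivity
    have hAb : A t ^ α ≤ (2 + 2 * M ^ 2) ^ α * (1 + ‖v‖ ^ 2) ^ α := by
      rw [← Real.mul_rpow hK.le hB.le]
      exact Real.rpow_le_rpow (hApos t).le (hAle t ht) hα
    have hinner : |⟪u t, v⟫ + ⟪v, u t⟫| ≤ 2 * (‖u t‖ * ‖v‖) := by
      calc |⟪u t, v⟫ + ⟪v, u t⟫| ≤ |⟪u t, v⟫| + |⟪v, u t⟫| := abs_add_le _ _
        _ ≤ ‖u t‖ * ‖v‖ + ‖v‖ * ‖u t‖ :=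
            add_le_add (abs_real_inner_le_norm _ _) (abs_real_inner_le_norm _ _)
        _ = 2 * (‖u t‖ * ‖v‖) := by ring
    have hterm1 : ‖(α * A t ^ (α - 1) * (⟪u t, v⟫ + ⟪v, u t⟫)) • u t‖
        ≤ 2 * α * A t ^ α * ‖v‖ := by
      rw [norm_smul, Real.norm_eq_abs, abs_mul, abs_mul,
        abs_of_nonneg hα, abs_of_nonneg (Real.rpow_nonneg hA.le _)]
      calc α * A t ^ (α - 1) * |⟪u t, v⟫ + ⟪v, u t⟫| * ‖u t‖
          ≤ α * A t ^ (α - 1) * (2 * (‖u t‖ * ‖v‖)) * ‖u t‖ := by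
            have hnn : 0 ≤ α * A t ^ (α - 1) := mul_nonneg hα (Real.rpow_nonneg hA.le _)
            gcongr
        _ = 2 * α * (A t ^ (α - 1) * ‖u t‖ ^ 2) * ‖v‖ := by ring
        _ ≤ 2 * α * (A t ^ (α - 1) * A t) * ‖v‖ := by
            have hX : 0 ≤ A t ^ (α - 1) := Real.rpow_nonneg hA.le _
            have hle : ‖u t‖ ^ 2 ≤ A t := by
              show ‖u t‖ ^ 2 ≤ 1 + ‖u t‖ ^ 2; linarith
            gcongr
        _ = 2 * α * A t ^ α * ‖v‖ := by
            rw [Real.rpow_sub_one hA.ne']; field_simp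
    have hterm2 : ‖(A t ^ α : ℝ) • v‖ = A t ^ α * ‖v‖ := by
      rw [norm_smul, Real.norm_eq_abs, abs_of_nonneg (Real.rpow_nonneg hA.le _)]
    calc ‖f' t‖ ≤ ‖(α * A t ^ (α - 1) * (⟪u t, v⟫ + ⟪v, u t⟫)) • u t‖
          + ‖(A t ^ α : ℝ) • v‖ := norm_add_le _ _
      _ ≤ 2 * α * A t ^ α * ‖v‖ + A t ^ α * ‖v‖ := by rw [hterm2]; gcongr
      _ = (1 + 2 * α) * (A t ^ α * ‖v‖) := by ring
      _ ≤ (1 + 2 * α) * ((2 + 2 * M ^ 2) ^ α * (1 + ‖v‖ ^ 2) ^ α * ‖v‖) :=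
          mul_le_mul_of_nonneg_left (mul_le_mul_of_nonneg_right hAb (norm_nonneg v))
            (by linarith)
      _ = (1 + 2 * α) * (2 + 2 * M ^ 2) ^ α * ((1 + ‖v‖ ^ 2) ^ α * ‖v‖) := by ring
  have hMVT : ‖f 1 - f 0‖ ≤
      (1 + 2 * α) * (2 + 2 * M ^ 2) ^ α * ((1 + ‖v‖ ^ 2) ^ α * ‖v‖) :=
    norm_image_sub_le_of_norm_deriv_le_segment_01'
      (fun t ht => (hderiv t).hasDerivWithinAt)
      (fun t ht => hbound t (Ico_subset_Icc_self ht))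
  have h1 : f 1 = Vp p z := by simp [hf_def, hu_def, hv_def]
  have h0 : f 0 = Vp p η := by simp [hf_def, hu_def]
  have hnormV : ‖Vp p v‖ = (1 + ‖v‖ ^ 2) ^ α * ‖v‖ := by
    rw [Vp, norm_smul, Real.norm_eq_abs,
      abs_of_nonneg (Real.rpow_nonneg (by positivity) _)]
  rw [hnormV, ← h1, ← h0]
  exact hMVT
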